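/- For all real numbers r, σ, b with r > 1, σ > 7, and 0 < b < 4, the following three inequalities hold: (i) r − 1 > (b(b+σ−1)² − 4σ(b+σb−b²))/(3σ²); (ii) σ²(r−1)(b−4) < 4σ(σb+b−b²) − b(b+σ−1)²; (iii) σr > (b−σ)(b−1). -/
import Mathlib

theorem stmt_2 (r σ b : ℝ) (hr : r > 1) (hσ : σ > 7) (hb0 : 0 < b) (hb4 : b < 4) :
    r - 1 > (b * (b + σ - 1)^2 - 4 * σ * (b + σ * b - b^2)) / (3 * σ^2) ∧
    σ^2 * (r - 1) * (b - 4) < 4 * σ * (σ * b + b - b^2) - b * (b + σ - 1)^2 ∧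
    σ * r > (b - σ) * (b - 1) := by
  have hσ0 : (0:ℝ) < σ := by linarith
  have hnum : b * (b + σ - 1)^2 - 4 * σ * (b + σ * b - b^2) < 0 := by
    nlinarith [mul_pos hb0 (by nlinarith : (0:ℝ) < 3*σ^2 - 6*b*σ - b^2 + 6*σ + 2*b - 1), sq_nonneg (b-1), sq_nonneg σ]
  refine ⟨?_, ?_, ?_⟩
  · have h3 : (0:ℝ) < 3*σ^2 := by positivity
    have := div_neg_of_neg_of_pos hnum h3
    linarith
  · nlinarith [mul_pos (mul_pos (pow_pos hσ0 2) (by linarith : (0:ℝ) < r - 1)) (by linarith : (0:ℝ) < 4 - b)]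
  · nlinarith [mul_pos hσ0 (by linarith : (0:ℝ) < r - 1), sq_nonneg (b-1)]
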